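/- arXiv:1406.3378 — 2 statements merged into one kernel-verified Lean document; each statement's English description precedes it below -/
import Mathlib

section
/- If f : ℕ^k → 𝒫(ℕ) and g : ℕ^{k+2} → 𝒫(ℕ) are probabilistic functions, then the function h : ℕ^{k+1} → 𝒫(ℕ) defined by primitive recursion, h(x⃗,0) = f(x⃗) and h(x⃗,y+1) = g(x⃗,y,h(x⃗,y)) (where the last argument is plugged in via generalized composition, i.e. h(x⃗,y+1)(w) = ∑_{z∈ℕ} g(x⃗,y,z)(w)·h(x⃗,y)(z)), is again a probabilistic function: for all x⃗ and y, h(x⃗,y) is a pseudodistribution on ℕ. -/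
noncomputable section
open scoped Classical

/-- A pseudodistribution on ℕ: pointwise nonnegative, summable, with total mass at most 1. -/
def IsPseudoDist (D : ℕ → ℝ) : Prop :=
  (∀ n, 0 ≤ D n) ∧ Summable D ∧ ∑' n, D n ≤ 1

/-- Primitive recursion of probabilistic functions:
h(x⃗,0) = f(x⃗) and h(x⃗,y+1)(w) = ∑_z g(x⃗,y,z)(w) · h(x⃗,y)(z)
(the last argument of g is plugged in via generalized composition). -/
def primRec {k : ℕ} (f : (Fin k → ℕ) → ℕ → ℝ)
    (g : (Fin k → ℕ) → ℕ → ℕ → ℕ → ℝ) : (Fin k → ℕ) → ℕ → ℕ → ℝ :=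
  fun x y =>
    Nat.rec (f x) (fun y' ih => fun w => ∑' z : ℕ, g x y' z w * ih z) y

lemma step_isPseudoDist (G : ℕ → ℕ → ℝ) (D : ℕ → ℝ)
    (hG : ∀ z, IsPseudoDist (G z)) (hD : IsPseudoDist D) :
    IsPseudoDist (fun w => ∑' z, G z w * D z) := by
  obtain ⟨hDpos, hDsum, hDle⟩ := hD
  set F : ℕ × ℕ → ℝ := fun p => G p.1 p.2 * D p.1 with hFdef
  have hFpos : ∀ p, 0 ≤ F p := fun p => mul_nonneg ((hG p.1).1 p.2) (hDpos p.1)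
  have hsec : ∀ z, Summable fun w => F (z, w) := fun z => ((hG z).2.1).mul_right (D z)
  have htsec : ∀ z, (∑' w, F (z, w)) = (∑' w, G z w) * D z := fun z => by simp only [hFdef]; exact tsum_mul_right
  have hcol : Summable fun z => ∑' w, F (z, w) := by
    apply Summable.of_nonneg_of_le (fun z => tsum_nonneg fun w => hFpos (z, w)) _ hDsum
    intro z
    rw [htsec z]
    calc (∑' w, G z w) * D z ≤ 1 * D z :=
          mul_le_mul_of_nonneg_right (hG z).2.2 (hDpos z)
      _ = D z := one_mul _
  have hF : Summable F := (summable_prod_of_nonneg hFpos).mpr ⟨hsec, hcol⟩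
  have hFswap : Summable (fun p : ℕ × ℕ => F p.swap) := hF.prod_symm
  have hkey := (summable_prod_of_nonneg (f := fun p : ℕ × ℕ => F p.swap)
    (fun p => hFpos p.swap)).mp hFswap
  refine ⟨fun w => tsum_nonneg fun z => hFpos (z, w), hkey.2, ?_⟩
  have h1 : (∑' w, ∑' z, G z w * D z) = ∑' p : ℕ × ℕ, F p.swap := (Summable.tsum_prod' hFswap hkey.1).symm
  have h2 : (∑' p : ℕ × ℕ, F p.swap) = ∑' p : ℕ × ℕ, F p :=
    (Equiv.prodComm ℕ ℕ).tsum_eq F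
  have h3 : (∑' p : ℕ × ℕ, F p) = ∑' z, ∑' w, F (z, w) := Summable.tsum_prod' hF hsec
  rw [h1, h2, h3]
  calc (∑' z, ∑' w, F (z, w)) ≤ ∑' z, D z := by
        apply Summable.tsum_le_tsum _ hcol hDsum
        intro z
        rw [htsec z]
        calc (∑' w, G z w) * D z ≤ 1 * D z :=
              mul_le_mul_of_nonneg_right (hG z).2.2 (hDpos z)
          _ = D z := one_mul _
    _ ≤ 1 := hDle

/-- the function defined by primitive recursion from probabilistic
functions f and g is again a probabilistic function. -/
theorem primRec_isPseudoDist {k : ℕ} (f : (Fin k → ℕ) → ℕ → ℝ)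
    (g : (Fin k → ℕ) → ℕ → ℕ → ℕ → ℝ)
    (hf : ∀ x, IsPseudoDist (f x))
    (hg : ∀ x y z, IsPseudoDist (g x y z)) :
    ∀ x y, IsPseudoDist (primRec f g x y) := by
  intro x y
  induction y with
  | zero => exact hf x
  | succ y ih => exact step_isPseudoDist (g x y) (primRec f g x y) (hg x y) ih
end
end

section
/- If f : ℕ^{k+1} → 𝒫(ℕ) is a probabilistic function, then its minimization (μf)(x⃗)(y) = f(x⃗,y)(0)·∏_{z<y} (∑_{k>0} f(x⃗,z)(k)) is again a probabilistic function: for every x⃗ ∈ ℕ^k, the values (μf)(x⃗)(y) are nonnegative and ∑_{y∈ℕ} (μf)(x⃗)(y) ≤ 1. -/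
noncomputable section
open scoped Classical

/-- Minimization of a probabilistic function:
(μf)(x⃗)(y) = f(x⃗,y)(0) · ∏_{z<y} (∑_{k>0} f(x⃗,z)(k)). -/
def minimize {k : ℕ} (f : (Fin (k + 1) → ℕ) → ℕ → ℝ) : (Fin k → ℕ) → ℕ → ℝ :=
  fun x y =>
    f (Fin.snoc x y) 0 *
      ∏ z ∈ Finset.range y, ∑' m : {m : ℕ // 0 < m}, f (Fin.snoc x z) (m : ℕ)

/-- the minimization of a probabilistic function is again a
probabilistic function. -/
theorem minimize_isPseudoDist {k : ℕ} (f : (Fin (k + 1) → ℕ) → ℕ → ℝ)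
    (hf : ∀ v, IsPseudoDist (f v)) :
    ∀ x, IsPseudoDist (minimize f x) := by
  intro x
  set q : ℕ → ℝ := fun z => ∑' m : {m : ℕ // 0 < m}, f (Fin.snoc x z) (m : ℕ) with hqdef
  have hq0 : ∀ z, 0 ≤ q z := fun z => tsum_nonneg fun m => (hf _).1 _
  have key : ∀ z, f (Fin.snoc x z) 0 + q z ≤ 1 := by
    intro z
    have h1 : q z = ∑' n, f (Fin.snoc x z) (n + 1) :=
      (Equiv.tsum_eq (⟨fun n => ⟨n + 1, n.succ_pos⟩, fun m => (m : ℕ) - 1,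
        fun n => by simp, fun m => Subtype.ext (Nat.succ_pred_eq_of_pos m.2)⟩ :
          ℕ ≃ {m : ℕ // 0 < m})
        fun m : {m : ℕ // 0 < m} => f (Fin.snoc x z) (m : ℕ)).symm
    have h2 := Summable.tsum_eq_zero_add (hf (Fin.snoc x z)).2.1
    calc f (Fin.snoc x z) 0 + q z = ∑' n, f (Fin.snoc x z) n := by rw [h1, h2]
      _ ≤ 1 := (hf _).2.2
  set P : ℕ → ℝ := fun y => ∏ z ∈ Finset.range y, q z with hPdef
  have hP0 : ∀ y, 0 ≤ P y := fun y => Finset.prod_nonneg fun z _ => hq0 z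
  have hnonneg : ∀ y, 0 ≤ minimize f x y := fun y =>
    mul_nonneg ((hf _).1 0) (hP0 y)
  have hstep : ∀ y, minimize f x y ≤ P y - P (y + 1) := by
    intro y
    have h1 : minimize f x y = f (Fin.snoc x y) 0 * P y := rfl
    have h2 : P (y + 1) = P y * q y := Finset.prod_range_succ _ _
    have h3 : f (Fin.snoc x y) 0 ≤ 1 - q y := by linarith [key y]
    calc minimize f x y = f (Fin.snoc x y) 0 * P y := h1
      _ ≤ (1 - q y) * P y := mul_le_mul_of_nonneg_right h3 (hP0 y)
      _ = P y - P (y + 1) := by rw [h2]; ring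
  have hbound : ∀ N, ∑ y ∈ Finset.range N, minimize f x y ≤ 1 := by
    intro N
    calc ∑ y ∈ Finset.range N, minimize f x y
        ≤ ∑ y ∈ Finset.range N, (P y - P (y + 1)) :=
          Finset.sum_le_sum fun y _ => hstep y
      _ = P 0 - P N := Finset.sum_range_sub' P N
      _ ≤ 1 := by
          have : P 0 = 1 := by simp [hPdef]
          linarith [hP0 N]
  refine ⟨hnonneg, summable_of_sum_range_le hnonneg hbound,
    Summable.tsum_le_of_sum_range_le (summable_of_sum_range_le hnonneg hbound) hbound⟩
end
end
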